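/- For the family B_per of periodic axis-parallel boxes and every ε ∈ (0,1), the inverse minimal dispersion satisfies N_{B_per}(d, ε) ≤ 8 d ε^{-1} [ log(8d) + log ε^{-1} ]. -/

import Mathlib

open MeasureTheory Set
open scoped ENNReal

/-- The periodic interval `I(x,y)`. -/
noncomputable def periodicInterval (x y : ℝ) : Set ℝ :=
  if x < y then Set.Ioo x y else Set.Icc 0 1 \ Set.Icc y x

/-- The periodic axis-parallel box `∏_k I_k(x,y)`. -/
noncomputable def periodicBox {d : ℕ} (x y : Fin d → ℝ) : Set (Fin d → ℝ) :=
  Set.univ.pi fun k => periodicInterval (x k) (y k)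

/-- The family of periodic axis-parallel boxes on `[0,1]^d`. -/
noncomputable def Bper (d : ℕ) : Set (Set (Fin d → ℝ)) :=
  {B | ∃ x y : Fin d → ℝ, (∀ k, x k ∈ Set.Icc (0:ℝ) 1) ∧
    (∀ k, y k ∈ Set.Icc (0:ℝ) 1) ∧ B = periodicBox x y}

/-- The minimal dispersion of `n`-point sets in `[0,1]^d` w.r.t. the test sets `𝓑`. -/
noncomputable def minDisp (d n : ℕ) (𝓑 : Set (Set (Fin d → ℝ))) : ENNReal :=
  ⨅ P : {P : Finset (Fin d → ℝ) //
      P.card = n ∧ (↑P : Set (Fin d → ℝ)) ⊆ Set.univ.pi fun _ => Set.Icc (0:ℝ) 1},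
    ⨆ B ∈ 𝓑, ⨆ _ : Disjoint B ((P : Finset (Fin d → ℝ)) : Set (Fin d → ℝ)), volume B

namespace Stmt17Aux

noncomputable def len (x y : ℝ) : ℝ := if x < y then y - x else 1 - (x - y)

lemma len_nonneg {x y : ℝ} (hx : x ∈ Icc (0:ℝ) 1) (hy : y ∈ Icc (0:ℝ) 1) :
    0 ≤ len x y := by
  unfold len; split_ifs with h
  · linarith
  · obtain ⟨hx0, hx1⟩ := hx; obtain ⟨hy0, hy1⟩ := hy; linarith

lemma len_le_one {x y : ℝ} (hx : x ∈ Icc (0:ℝ) 1) (hy : y ∈ Icc (0:ℝ) 1) :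
    len x y ≤ 1 := by
  unfold len; split_ifs with h
  · obtain ⟨hx0, hx1⟩ := hx; obtain ⟨hy0, hy1⟩ := hy; linarith
  · push_neg at h; obtain ⟨hx0, hx1⟩ := hx; obtain ⟨hy0, hy1⟩ := hy; linarith

lemma periodicInterval_subset {x y : ℝ} (hx : x ∈ Icc (0:ℝ) 1) (hy : y ∈ Icc (0:ℝ) 1) :
    periodicInterval x y ⊆ Icc (0:ℝ) 1 := by
  unfold periodicInterval; split_ifs with h
  · exact fun t ht => ⟨hx.1.trans ht.1.le, ht.2.le.trans hy.2⟩
  · exact diff_subset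

lemma measurableSet_periodicInterval (x y : ℝ) : MeasurableSet (periodicInterval x y) := by
  unfold periodicInterval; split_ifs
  · exact measurableSet_Ioo
  · exact measurableSet_Icc.diff measurableSet_Icc

lemma vol_periodicInterval {x y : ℝ} (hx : x ∈ Icc (0:ℝ) 1) (hy : y ∈ Icc (0:ℝ) 1) :
    volume (periodicInterval x y) = ENNReal.ofReal (len x y) := by
  unfold periodicInterval len; split_ifs with h
  · exact Real.volume_Ioo
  · push_neg at h
    rw [measure_diff (Icc_subset_Icc hy.1 hx.2) measurableSet_Icc.nullMeasurableSet
      (by rw [Real.volume_Icc]; exact ENNReal.ofReal_ne_top),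
      Real.volume_Icc, Real.volume_Icc, ← ENNReal.ofReal_sub _ (by linarith)]
    norm_num

lemma measurableSet_periodicBox {d : ℕ} (x y : Fin d → ℝ) :
    MeasurableSet (periodicBox x y) :=
  MeasurableSet.univ_pi fun k => measurableSet_periodicInterval _ _

lemma periodicBox_subset {d : ℕ} {x y : Fin d → ℝ} (hx : ∀ k, x k ∈ Icc (0:ℝ) 1)
    (hy : ∀ k, y k ∈ Icc (0:ℝ) 1) :
    periodicBox x y ⊆ Set.univ.pi fun _ => Icc (0:ℝ) 1 :=
  Set.pi_mono fun k _ => periodicInterval_subset (hx k) (hy k)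

lemma vol_periodicBox {d : ℕ} {x y : Fin d → ℝ} (hx : ∀ k, x k ∈ Icc (0:ℝ) 1)
    (hy : ∀ k, y k ∈ Icc (0:ℝ) 1) :
    volume (periodicBox x y) = ENNReal.ofReal (∏ k, len (x k) (y k)) := by
  rw [periodicBox, volume_pi_pi, ENNReal.ofReal_prod_of_nonneg
    (fun k _ => len_nonneg (hx k) (hy k))]
  exact Finset.prod_congr rfl fun k _ => vol_periodicInterval (hx k) (hy k)

lemma prod_lower {ι : Type*} (s : Finset ι) (a b : ι → ℝ)
    (hb0 : ∀ i ∈ s, 0 ≤ b i) (hba : ∀ i ∈ s, b i ≤ a i) (ha1 : ∀ i ∈ s, a i ≤ 1) :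
    ∏ i ∈ s, a i - ∑ i ∈ s, (a i - b i) ≤ ∏ i ∈ s, b i := by
  classical
  induction s using Finset.induction_on with
  | empty => simp
  | insert _ _ hi ih =>
    rename_i j s
    have hb0' : ∀ i ∈ s, 0 ≤ b i := fun i h => hb0 i (Finset.mem_insert_of_mem h)
    have hba' : ∀ i ∈ s, b i ≤ a i := fun i h => hba i (Finset.mem_insert_of_mem h)
    have ha1' : ∀ i ∈ s, a i ≤ 1 := fun i h => ha1 i (Finset.mem_insert_of_mem h)
    have IH := ih hb0' hba' ha1'
    rw [Finset.prod_insert hi, Finset.prod_insert hi, Finset.sum_insert hi]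
    have hpa0 : (0:ℝ) ≤ ∏ i ∈ s, a i :=
      Finset.prod_nonneg fun i h => le_trans (hb0' i h) (hba' i h)
    have hpa1 : ∏ i ∈ s, a i ≤ 1 :=
      Finset.prod_le_one (fun i h => le_trans (hb0' i h) (hba' i h)) ha1'
    have hsum0 : (0:ℝ) ≤ ∑ i ∈ s, (a i - b i) :=
      Finset.sum_nonneg fun i h => by linarith [hba' i h]
    have hbj0 := hb0 j (Finset.mem_insert_self j s)
    have hbja := hba j (Finset.mem_insert_self j s)
    have haj1 := ha1 j (Finset.mem_insert_self j s)
    nlinarith [mul_le_mul_of_nonneg_left IH hbj0]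

/-- a product of factors in `[0,1]` is bounded by any single factor -/
lemma prod_le_single {d : ℕ} (f : Fin d → ℝ) (h0 : ∀ k, 0 ≤ f k) (h1 : ∀ k, f k ≤ 1)
    (k : Fin d) : ∏ j, f j ≤ f k := by
  classical
  rw [← Finset.mul_prod_erase Finset.univ f (Finset.mem_univ k)]
  calc f k * ∏ j ∈ Finset.univ.erase k, f j ≤ f k * 1 := by
        apply mul_le_mul_of_nonneg_left _ (h0 k)
        exact Finset.prod_le_one (fun j _ => h0 j) (fun j _ => h1 j)
    _ = f k := mul_one _

lemma round (M : ℕ) (hM : 0 < M) (x y : ℝ) (hx : x ∈ Icc (0:ℝ) 1) (hy : y ∈ Icc (0:ℝ) 1)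
    (h : 2 / M < len x y) :
    ∃ i j : Fin (M + 1),
      periodicInterval ((i : ℝ) / M) ((j : ℝ) / M) ⊆ periodicInterval x y ∧
      len x y - 2 / M ≤ len ((i : ℝ) / M) ((j : ℝ) / M) ∧
      len ((i : ℝ) / M) ((j : ℝ) / M) ≤ len x y := by
  have hMR : (0:ℝ) < M := Nat.cast_pos.mpr hM
  obtain ⟨hx0, hx1⟩ := hx
  obtain ⟨hy0, hy1⟩ := hy
  have hxM : 0 ≤ x * M := mul_nonneg hx0 hMR.le
  have hyM : 0 ≤ y * M := mul_nonneg hy0 hMR.le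
  have hiM : ⌈x * M⌉₊ ≤ M := Nat.ceil_le.mpr (by nlinarith)
  have hjM : ⌊y * M⌋₊ ≤ M := by
    have := Nat.floor_le_floor (R := ℝ) (show y * M ≤ M by nlinarith)
    simpa using this
  refine ⟨⟨⌈x * M⌉₊, by omega⟩, ⟨⌊y * M⌋₊, by omega⟩, ?_⟩
  set x' : ℝ := (⌈x * M⌉₊ : ℝ) / M with hx'def
  set y' : ℝ := (⌊y * M⌋₊ : ℝ) / M with hy'def
  have hxx' : x ≤ x' := by
    rw [hx'def, le_div_iff₀ hMR]; exact Nat.le_ceil _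
  have hx'x : x' ≤ x + 1 / M := by
    rw [hx'def, div_le_iff₀ hMR]
    have := Nat.ceil_lt_add_one hxM
    have h2 : (x + 1 / M) * M = x * M + 1 := by field_simp
    rw [h2]; linarith
  have hy'y : y' ≤ y := by
    rw [hy'def, div_le_iff₀ hMR]; exact Nat.floor_le hyM
  have hyy' : y - 1 / M ≤ y' := by
    rw [hy'def, le_div_iff₀ hMR]
    have := Nat.lt_floor_add_one (y * M)
    have h2 : (y - 1 / M) * M = y * M - 1 := by field_simp
    rw [h2]; linarith
  have h2M : 2 / (M:ℝ) = 1/M + 1/M := by ring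
  by_cases hxy : x < y
  · have hlen : len x y = y - x := if_pos hxy
    rw [hlen] at h
    have hx'y' : x' < y' := by linarith
    have hlen' : len x' y' = y' - x' := if_pos hx'y'
    refine ⟨?_, ?_, ?_⟩
    · unfold periodicInterval
      rw [if_pos hxy, if_pos hx'y']
      exact Ioo_subset_Ioo hxx' hy'y
    · rw [hlen, hlen']; linarith
    · rw [hlen, hlen']; linarith
  · push_neg at hxy
    have hlen : len x y = 1 - (x - y) := if_neg (not_lt.mpr hxy)
    have hy'x' : ¬ x' < y' := not_lt.mpr (by linarith)
    have hlen' : len x' y' = 1 - (x' - y') := if_neg hy'x'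
    refine ⟨?_, ?_, ?_⟩
    · unfold periodicInterval
      rw [if_neg (not_lt.mpr hxy), if_neg hy'x']
      exact diff_subset_diff_right (Icc_subset_Icc hy'y hxx')
    · rw [hlen, hlen']; linarith
    · rw [hlen, hlen']; linarith

lemma vol_cube (d : ℕ) : volume (Set.univ.pi fun _ : Fin d => Icc (0:ℝ) 1) = 1 := by
  rw [volume_pi_pi]
  simp [Real.volume_Icc]

lemma exists_hitting {d n : ℕ} {ι : Type*} [Fintype ι] (S : ι → Set (Fin d → ℝ))
    (hmeas : ∀ p, MeasurableSet (S p))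
    (hsub : ∀ p, S p ⊆ Set.univ.pi fun _ => Icc (0:ℝ) 1)
    (δ : ℝ) (hδ0 : 0 < δ) (hδ1 : δ ≤ 1)
    (hvol : ∀ p, ENNReal.ofReal δ ≤ volume (S p))
    (hcard : (Fintype.card ι : ℝ) * (1 - δ) ^ n < 1) :
    ∃ ω : Fin n → (Fin d → ℝ),
      (∀ i, ω i ∈ Set.univ.pi fun _ : Fin d => Icc (0:ℝ) 1) ∧ ∀ p, ∃ i, ω i ∈ S p := by
  classical
  set C : Set (Fin d → ℝ) := Set.univ.pi fun _ => Icc (0:ℝ) 1 with hC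
  have hCmeas : MeasurableSet C := MeasurableSet.univ_pi fun _ => measurableSet_Icc
  set μ : Measure (Fin d → ℝ) := volume.restrict C with hμ
  haveI : IsProbabilityMeasure μ := ⟨by rw [hμ, Measure.restrict_apply_univ]; exact vol_cube d⟩
  set ν : Measure (Fin n → Fin d → ℝ) := Measure.pi (fun _ => μ) with hν
  haveI : IsProbabilityMeasure ν := Measure.pi.instIsProbabilityMeasure _
  set U : Set (Fin n → Fin d → ℝ) :=
    (Set.univ.pi fun _ : Fin n => C)ᶜ ∪ ⋃ p : ι, Set.univ.pi fun _ : Fin n => (S p)ᶜ with hU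
  have hμS : ∀ p, μ (S p) = volume (S p) := by
    intro p
    rw [hμ, Measure.restrict_apply (hmeas p), Set.inter_eq_self_of_subset_left (hsub p)]
  have hcompl : ∀ p, μ (S p)ᶜ ≤ ENNReal.ofReal (1 - δ) := by
    intro p
    rw [measure_compl (hmeas p) (measure_ne_top μ _), measure_univ]
    calc (1:ℝ≥0∞) - μ (S p) ≤ 1 - ENNReal.ofReal δ := by
          exact tsub_le_tsub_left ((hμS p) ▸ hvol p) 1
      _ = ENNReal.ofReal (1 - δ) := by
          rw [ENNReal.ofReal_sub _ hδ0.le, ENNReal.ofReal_one]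
  have hbad : ν (Set.univ.pi fun _ : Fin n => C)ᶜ = 0 := by
    rw [measure_compl (MeasurableSet.univ_pi fun _ => hCmeas) (measure_ne_top ν _),
      measure_univ, hν, Measure.pi_pi]
    have : μ C = 1 := by
      rw [hμ, Measure.restrict_apply hCmeas, Set.inter_self]; exact vol_cube d
    simp [this]
  have hνU : ν U < 1 := by
    calc ν U ≤ ν (Set.univ.pi fun _ : Fin n => C)ᶜ
        + ν (⋃ p : ι, Set.univ.pi fun _ : Fin n => (S p)ᶜ) := measure_union_le _ _
      _ ≤ 0 + ∑ p : ι, ν (Set.univ.pi fun _ : Fin n => (S p)ᶜ) := by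
          rw [hbad]
          exact add_le_add le_rfl (measure_iUnion_fintype_le _ _)
      _ ≤ ∑ p : ι, ENNReal.ofReal ((1 - δ) ^ n) := by
          rw [zero_add]
          refine Finset.sum_le_sum fun p _ => ?_
          rw [hν, Measure.pi_pi, Finset.prod_const, Finset.card_univ, Fintype.card_fin,
            ENNReal.ofReal_pow (by linarith)]
          exact pow_le_pow_left' (hcompl p) n
      _ = ENNReal.ofReal ((Fintype.card ι : ℝ) * (1 - δ) ^ n) := by
          rw [Finset.sum_const, Finset.card_univ, nsmul_eq_mul,
            ← ENNReal.ofReal_natCast, ← ENNReal.ofReal_mul (Nat.cast_nonneg _)]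
      _ < 1 := ENNReal.ofReal_lt_one.mpr hcard
  have hUne : U ≠ Set.univ := by
    intro heq
    rw [heq, measure_univ] at hνU
    exact lt_irrefl _ hνU
  obtain ⟨ω, hω⟩ : ∃ ω, ω ∉ U := by
    by_contra hcon
    push_neg at hcon
    exact hUne (Set.eq_univ_iff_forall.mpr hcon)
  rw [hU, Set.mem_union, not_or, Set.mem_compl_iff, not_not, Set.mem_iUnion] at hω
  obtain ⟨hω1, hω2⟩ := hω
  push_neg at hω2
  refine ⟨ω, fun i => hω1 i (Set.mem_univ i), fun p => ?_⟩
  have := hω2 p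
  rw [Set.mem_univ_pi] at this
  push_neg at this
  obtain ⟨i, hi⟩ := this
  exact ⟨i, not_not.mp hi⟩

end Stmt17Aux

set_option maxHeartbeats 1000000 in
open Stmt17Aux in
theorem stmt17 (d : ℕ) (hd : 1 ≤ d) (ε : ℝ) (hε : ε ∈ Set.Ioo (0:ℝ) 1) :
    ((sInf {n : ℕ | minDisp d n (Bper d) ≤ ENNReal.ofReal ε} : ℕ) : ℝ) ≤
      8 * d * ε⁻¹ * (Real.log (8 * d) + Real.log ε⁻¹) := by
  classical
  obtain ⟨hε0, hε1⟩ := hε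
  have hεinv : 1 ≤ ε⁻¹ := (one_le_inv₀ hε0).2 hε1.le
  have hd1 : (1:ℝ) ≤ d := by exact_mod_cast hd
  set c : ℝ := 8 * d / ε with hc
  have hc0 : (0:ℝ) < c := by positivity
  have hc8 : (8:ℝ) ≤ c := by
    rw [hc, le_div_iff₀ hε0]; nlinarith
  have hlogc : (2:ℝ) ≤ Real.log c := by
    have h1 : Real.log 8 ≤ Real.log c := Real.log_le_log (by norm_num) hc8
    have h2 : Real.log 8 = 3 * Real.log 2 := by
      rw [show (8:ℝ) = 2 ^ (3:ℕ) by norm_num, Real.log_pow]; norm_num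
    nlinarith [Real.log_two_gt_d9]
  set a : ℝ := 4 * d * ε⁻¹ * Real.log c with ha
  have ha8 : (8:ℝ) ≤ a := by
    have t1 : (1:ℝ) ≤ (d:ℝ) * ε⁻¹ := by nlinarith
    rw [ha]
    nlinarith [mul_le_mul t1 hlogc (by norm_num) (by nlinarith : (0:ℝ) ≤ (d:ℝ) * ε⁻¹)]
  have ha0 : (0:ℝ) ≤ a := by linarith
  set n : ℕ := ⌊a⌋₊ + 1 with hn
  have hn_gt : a < n := by
    rw [hn]; push_cast; exact Nat.lt_floor_add_one a
  have hn_le : (n:ℝ) ≤ 2 * a := by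
    rw [hn]; push_cast
    have := Nat.floor_le ha0
    linarith
  set M : ℕ := ⌈4 * d / ε⌉₊ with hM
  have hM0 : 0 < M := by
    rw [hM]; exact Nat.ceil_pos.mpr (by positivity)
  have hMR : (0:ℝ) < M := Nat.cast_pos.mpr hM0
  have hMge : 4 * d / ε ≤ M := Nat.le_ceil _
  have hMlt : (M:ℝ) + 1 ≤ c := by
    have h1 : (M:ℝ) < 4 * d / ε + 1 := Nat.ceil_lt_add_one (by positivity)
    have h2 : 4 * d / ε + 2 ≤ c := by
      rw [hc, div_add' _ _ _ hε0.ne', div_le_div_iff_of_pos_right hε0]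
      nlinarith
    linarith
  have h2M : 2 / (M:ℝ) ≤ ε / (2 * d) := by
    rw [div_le_div_iff₀ hMR (by positivity)]
    have h4 : 4 * d ≤ (M:ℝ) * ε := (div_le_iff₀ hε0).mp hMge
    nlinarith
  have hεd : ε / (2 * d) ≤ ε / 2 := by
    apply div_le_div_of_nonneg_left hε0.le (by norm_num)
    nlinarith
  -- the grid
  have hgrid : ∀ i : Fin (M + 1), ((i:ℝ) / M) ∈ Icc (0:ℝ) 1 := by
    intro i
    constructor
    · positivity
    · rw [div_le_one hMR]
      exact_mod_cast Nat.lt_succ_iff.mp i.isLt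
  -- the cover boxes
  set box : ((Fin d → Fin (M+1)) × (Fin d → Fin (M+1))) → Set (Fin d → ℝ) :=
    fun p => periodicBox (fun k => ((p.1 k : ℝ)) / M) (fun k => ((p.2 k : ℝ)) / M) with hbox
  set ι' := {p : (Fin d → Fin (M+1)) × (Fin d → Fin (M+1)) //
    ENNReal.ofReal (ε/2) ≤ volume (box p)} with hι'
  have hcard' : (Fintype.card ι' : ℝ) * (1 - ε/2) ^ n < 1 := by
    have hcle : Fintype.card ι' ≤ (M+1) ^ d * (M+1) ^ d := by
      calc Fintype.card ι' ≤ Fintype.card ((Fin d → Fin (M+1)) × (Fin d → Fin (M+1))) :=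
            Fintype.card_subtype_le _
        _ = (M+1) ^ d * (M+1) ^ d := by simp
    have hcleR : (Fintype.card ι' : ℝ) ≤ ((M:ℝ)+1) ^ (2*d) := by
      have := (Nat.cast_le (α := ℝ)).mpr hcle
      calc (Fintype.card ι' : ℝ) ≤ (((M+1) ^ d * (M+1) ^ d : ℕ) : ℝ) := this
        _ = ((M:ℝ)+1) ^ (2*d) := by push_cast; rw [two_mul, pow_add]
    have hhalf : (0:ℝ) ≤ 1 - ε/2 := by linarith
    have e1 : (1 - ε/2) ^ n ≤ Real.exp ((n:ℕ) * -(ε/2)) := by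
      rw [Real.exp_nat_mul]
      exact pow_le_pow_left₀ hhalf (by linarith [Real.add_one_le_exp (-(ε/2))]) n
    have e2 : ((M:ℝ)+1) ^ (2*d) ≤ Real.exp (((2*d : ℕ):ℝ) * Real.log c) := by
      rw [Real.exp_nat_mul, Real.exp_log hc0]
      exact pow_le_pow_left₀ (by positivity) hMlt _
    have key : ((2*d:ℕ):ℝ) * Real.log c + (n:ℕ) * -(ε/2) < 0 := by
      have hcast : ((2*d:ℕ):ℝ) = 2 * (d:ℝ) := by push_cast; ring
      rw [hcast]
      have haε : a * (ε/2) = 2 * (d:ℝ) * Real.log c := by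
        rw [show a * (ε/2) = 2 * (d:ℝ) * Real.log c * (ε⁻¹ * ε) by rw [ha]; ring,
          inv_mul_cancel₀ hε0.ne', mul_one]
      linarith [mul_lt_mul_of_pos_right hn_gt (show (0:ℝ) < ε/2 by positivity)]
    have e3 : Real.exp (((2*d:ℕ):ℝ) * Real.log c) * Real.exp ((n:ℕ) * -(ε/2)) < 1 := by
      rw [← Real.exp_add, ← Real.exp_zero]
      exact Real.exp_lt_exp.mpr key
    have hpow0 : (0:ℝ) ≤ (1 - ε/2) ^ n := pow_nonneg hhalf n
    calc (Fintype.card ι' : ℝ) * (1 - ε/2) ^ n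
        ≤ ((M:ℝ)+1) ^ (2*d) * (1 - ε/2) ^ n := mul_le_mul_of_nonneg_right hcleR hpow0
      _ ≤ Real.exp (((2*d:ℕ):ℝ) * Real.log c) * Real.exp ((n:ℕ) * -(ε/2)) := by
          apply mul_le_mul e2 e1 hpow0 (Real.exp_nonneg _)
      _ < 1 := e3
  obtain ⟨ω, hωC, hωhit⟩ := exists_hitting (fun p : ι' => box p.val)
    (fun p => measurableSet_periodicBox _ _)
    (fun p => periodicBox_subset (fun k => hgrid _) (fun k => hgrid _))
    (ε/2) (by positivity) (by linarith) (fun p => p.2) hcard'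
  -- build the point set
  set P0 : Finset (Fin d → ℝ) := Finset.image ω Finset.univ with hP0
  have hcubeInf : (Set.univ.pi fun _ : Fin d => Icc (0:ℝ) 1).Infinite := by
    have himg : ((fun t : ℝ => fun _ : Fin d => t) '' Icc (0:ℝ) 1).Infinite := by
      apply Set.Infinite.image _ (Set.Icc_infinite (by norm_num))
      intro s _ t _ hst
      exact congrFun hst ⟨0, hd⟩
    apply himg.mono
    rintro _ ⟨t, ht, rfl⟩
    exact fun k _ => ht
  have hP0sub : (↑P0 : Set (Fin d → ℝ)) ⊆ Set.univ.pi fun _ : Fin d => Icc (0:ℝ) 1 := by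
    intro z hz
    rw [hP0, Finset.coe_image] at hz
    obtain ⟨i, _, rfl⟩ := hz
    exact hωC i
  have hP0le : (↑P0 : Set (Fin d → ℝ)).ncard ≤ n := by
    rw [Set.ncard_coe_finset]
    calc P0.card ≤ Finset.univ.card := Finset.card_image_le
      _ = n := by simp
  obtain ⟨Ps, hPs1, hPs2, hPs3⟩ := hcubeInf.exists_superset_ncard_eq hP0sub
    P0.finite_toSet hP0le
  have hPsfin : Ps.Finite := by
    by_contra hinf
    rw [Set.Infinite.ncard hinf] at hPs3
    omega
  set P : Finset (Fin d → ℝ) := hPsfin.toFinset with hPdef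
  have hPcard : P.card = n := by
    rw [hPdef, ← Set.ncard_eq_toFinset_card Ps hPsfin]
    exact hPs3
  have hPcoe : (↑P : Set (Fin d → ℝ)) = Ps := hPsfin.coe_toFinset
  have hPsub : (↑P : Set (Fin d → ℝ)) ⊆ Set.univ.pi fun _ => Icc (0:ℝ) 1 := by
    rw [hPcoe]; exact hPs2
  -- the dispersion bound
  have hmd : minDisp d n (Bper d) ≤ ENNReal.ofReal ε := by
    unfold minDisp
    refine le_trans (iInf_le _ ⟨P, hPcard, hPsub⟩) ?_
    apply iSup₂_le
    rintro B ⟨x, y, hx, hy, rfl⟩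
    apply iSup_le
    intro hdisj
    rw [vol_periodicBox hx hy]
    apply ENNReal.ofReal_le_ofReal
    by_contra hgt
    push_neg at hgt
    have hlen_each : ∀ k, ε < len (x k) (y k) := fun k =>
      lt_of_lt_of_le hgt (prod_le_single _ (fun j => len_nonneg (hx j) (hy j))
        (fun j => len_le_one (hx j) (hy j)) k)
    have hcond : ∀ k, 2 / (M:ℝ) < len (x k) (y k) := fun k => by
      have := hlen_each k; linarith [h2M, hεd, div_le_self hε0.le (show (1:ℝ) ≤ 2 by norm_num)]
    choose i j hsubk hgek hlek using fun k =>
      round M hM0 (x k) (y k) (hx k) (hy k) (hcond k)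
    set p : (Fin d → Fin (M+1)) × (Fin d → Fin (M+1)) := (i, j) with hp
    have hboxsub : box p ⊆ periodicBox x y := Set.pi_mono fun k _ => hsubk k
    have hvolp : ENNReal.ofReal (ε/2) ≤ volume (box p) := by
      rw [hbox, vol_periodicBox (fun k => hgrid _) (fun k => hgrid _)]
      apply ENNReal.ofReal_le_ofReal
      have hsum : ∑ k : Fin d, (len (x k) (y k) - len ((i k : ℝ)/M) ((j k : ℝ)/M))
          ≤ ε / 2 := by
        calc ∑ k : Fin d, (len (x k) (y k) - len ((i k : ℝ)/M) ((j k : ℝ)/M))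
            ≤ ∑ _k : Fin d, 2 / (M:ℝ) :=
              Finset.sum_le_sum fun k _ => by linarith [hgek k]
          _ = d * (2 / (M:ℝ)) := by rw [Finset.sum_const]; simp [nsmul_eq_mul]
          _ ≤ d * (ε / (2 * d)) := by
              apply mul_le_mul_of_nonneg_left h2M (by positivity)
          _ = ε / 2 := by field_simp
      have hplow := prod_lower Finset.univ (fun k => len (x k) (y k))
        (fun k => len ((i k : ℝ)/M) ((j k : ℝ)/M))
        (fun k _ => len_nonneg (hgrid _) (hgrid _))
        (fun k _ => hlek k)
        (fun k _ => len_le_one (hx k) (hy k))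
      have : ε - ε/2 ≤ ∏ k, len ((i k : ℝ)/M) ((j k : ℝ)/M) := by
        calc ε - ε/2 ≤ (∏ k, len (x k) (y k)) - ε/2 := by linarith
          _ ≤ (∏ k, len (x k) (y k))
              - ∑ k : Fin d, (len (x k) (y k) - len ((i k : ℝ)/M) ((j k : ℝ)/M)) := by
                linarith
          _ ≤ ∏ k, len ((i k : ℝ)/M) ((j k : ℝ)/M) := hplow
      linarith
    obtain ⟨i0, hi0⟩ := hωhit ⟨p, hvolp⟩
    have hi0P : ω i0 ∈ (↑P : Set (Fin d → ℝ)) := by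
      rw [hPcoe]
      apply hPs1
      rw [hP0, Finset.coe_image]
      exact ⟨i0, Finset.mem_coe.mpr (Finset.mem_univ i0), rfl⟩
    exact Set.disjoint_left.mp hdisj (hboxsub hi0) hi0P
  -- conclude
  have hmem : n ∈ {n : ℕ | minDisp d n (Bper d) ≤ ENNReal.ofReal ε} := hmd
  have hsInf : sInf {n : ℕ | minDisp d n (Bper d) ≤ ENNReal.ofReal ε} ≤ n :=
    Nat.sInf_le hmem
  have hlog : Real.log (8 * d) + Real.log ε⁻¹ = Real.log c := by
    rw [hc, div_eq_mul_inv, Real.log_mul (by positivity) (inv_ne_zero hε0.ne')]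
  calc ((sInf {n : ℕ | minDisp d n (Bper d) ≤ ENNReal.ofReal ε} : ℕ) : ℝ)
      ≤ (n : ℝ) := Nat.cast_le.mpr hsInf
    _ ≤ 2 * a := hn_le
    _ = 8 * d * ε⁻¹ * Real.log c := by rw [ha]; ring
    _ = 8 * d * ε⁻¹ * (Real.log (8 * d) + Real.log ε⁻¹) := by rw [hlog]
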